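/- For every p ≥ 1, the sum over all m-labeled unranked trees of size p of the root degree equals 3p·T_{m,p}/(p+2), where T_{m,p} = (1/(p+1))·C(2p,p)·m^{p+1}. -/

import Mathlib

inductive UTree (σ : Type) : Type where
  | node : σ → List (UTree σ) → UTree σ

namespace UTree
variable {σ : Type}

noncomputable instance : DecidableEq (UTree σ) := Classical.decEq _

def children : UTree σ → List (UTree σ)
  | node _ cs => cs

def subs : UTree σ → List (UTree σ)
  | node a cs => node a cs :: (cs.attach.map (fun ⟨c, _⟩ => subs c)).flatten

def sibs : UTree σ → List (List (UTree σ))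
  | node _ cs => cs.tails.filter (fun l => !l.isEmpty)
      ++ (cs.attach.map (fun ⟨c, _⟩ => sibs c)).flatten

def sibseqs (t : UTree σ) : List (List (UTree σ)) := [t] :: sibs t

def edges : UTree σ → ℕ
  | node _ cs => cs.length + (cs.attach.map (fun ⟨c, _⟩ => edges c)).sum

def rootDeg : UTree σ → ℕ
  | node _ cs => cs.length

def nodes : UTree σ → ℕ
  | node _ cs => 1 + (cs.attach.map (fun ⟨c, _⟩ => nodes c)).sum

end UTree

namespace UTreeAux
open UTree

variable {σ : Type}

@[simp] lemma edges_node (a : σ) (cs : List (UTree σ)) :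
    edges (node a cs) = cs.length + (cs.map edges).sum := by
  rw [edges]
  congr 1
  congr 1
  exact List.attach_map_val (l := cs) (f := edges)

lemma edges_eq_zero {t : UTree σ} (h : edges t = 0) : ∃ a, t = node a [] := by
  cases t with
  | node a cs =>
    cases cs with
    | nil => exact ⟨a, rfl⟩
    | cons c cs => simp [edges_node] at h

/-- attach a new first child to the root -/
def consT (c : UTree σ) : UTree σ → UTree σ
  | node a cs => node a (c :: cs)

@[simp] lemma edges_consT (c t : UTree σ) :
    edges (consT c t) = edges c + edges t + 1 := by
  cases t with
  | node a cs => simp [consT]; omega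

@[simp] lemma rootDeg_consT (c t : UTree σ) :
    rootDeg (consT c t) = rootDeg t + 1 := by
  cases t with
  | node a cs => simp [consT, rootDeg]

/-- detach the first child of the root (junk on leaves) -/
def decT : UTree σ → UTree σ × UTree σ
  | node a [] => (node a [], node a [])
  | node a (c :: cs) => (c, node a cs)

@[simp] lemma decT_consT (c t : UTree σ) : decT (consT c t) = (c, t) := by
  cases t with
  | node a cs => simp [consT, decT]

lemma consT_decT {t : UTree σ} (h : edges t ≠ 0) :
    consT (decT t).1 (decT t).2 = t := by
  cases t with
  | node a cs =>
    cases cs with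
    | nil => simp [edges_node] at h
    | cons c cs => simp [consT, decT]

lemma exists_consT {t : UTree σ} (h : edges t ≠ 0) : ∃ c t', t = consT c t' :=
  ⟨(decT t).1, (decT t).2, (consT_decT h).symm⟩

lemma finite_edges [Finite σ] (n : ℕ) : {t : UTree σ | edges t = n}.Finite := by
  induction n using Nat.strong_induction_on with
  | _ n ih =>
    match n with
    | 0 =>
      apply (Set.finite_range (fun a : σ => node a [])).subset
      rintro t ht
      obtain ⟨a, rfl⟩ := edges_eq_zero ht
      exact ⟨a, rfl⟩
    | (n + 1) =>
      have hsub : {t : UTree σ | edges t = n + 1} ⊆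
          (fun p : UTree σ × UTree σ => consT p.1 p.2) ''
            (⋃ i ∈ Finset.range (n + 1),
              {c : UTree σ | edges c = i} ×ˢ {t : UTree σ | edges t = n - i}) := by
        rintro t ht
        have ht' : edges t = n + 1 := ht
        obtain ⟨c, t', rfl⟩ := exists_consT (t := t) (by omega)
        rw [edges_consT] at ht'
        refine ⟨(c, t'), ?_, rfl⟩
        simp only [Set.mem_iUnion, Set.mem_prod, Set.mem_setOf_eq]
        exact ⟨edges c, Finset.mem_range.2 (by omega), rfl, by omega⟩
      refine Set.Finite.subset (Set.Finite.image _ ?_) hsub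
      refine Set.Finite.biUnion (Finset.range (n + 1)).finite_toSet fun i hi => ?_
      have hi' : i < n + 1 := Finset.mem_range.1 hi
      exact (ih i (by omega)).prod (ih (n - i) (by omega))

/-- the finset of all trees over `Fin m` with `n` edges -/
noncomputable def A (m n : ℕ) : Finset (UTree (Fin m)) :=
  (finite_edges n).toFinset

lemma mem_A {m n : ℕ} {t : UTree (Fin m)} : t ∈ A m n ↔ edges t = n := by
  simp [A]

lemma A_zero (m : ℕ) : A m 0 = Finset.image (fun a : Fin m => node a []) Finset.univ := by
  ext t
  simp only [mem_A, Finset.mem_image, Finset.mem_univ, true_and]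
  constructor
  · intro h
    obtain ⟨a, rfl⟩ := edges_eq_zero h
    exact ⟨a, rfl⟩
  · rintro ⟨a, rfl⟩
    simp

lemma node_nil_inj (m : ℕ) :
    Function.Injective (fun a : Fin m => (node a [] : UTree (Fin m))) := by
  intro a b h
  simpa using h

lemma sum_A_succ (m n : ℕ) (f : UTree (Fin m) → ℕ) :
    ∑ t ∈ A m (n + 1), f t
      = ∑ i ∈ Finset.range (n + 1), ∑ c ∈ A m i, ∑ t ∈ A m (n - i), f (consT c t) := by
  have hR : ∑ i ∈ Finset.range (n + 1), ∑ c ∈ A m i, ∑ t ∈ A m (n - i), f (consT c t)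
      = ∑ x ∈ (Finset.range (n + 1)).sigma (fun i => A m i ×ˢ A m (n - i)),
          f (consT x.2.1 x.2.2) := by
    rw [Finset.sum_sigma]
    refine Finset.sum_congr rfl fun i _ => ?_
    rw [Finset.sum_product]
  rw [hR]
  refine Finset.sum_bij'
    (fun t _ => (⟨edges (decT t).1, decT t⟩ : Σ _ : ℕ, UTree (Fin m) × UTree (Fin m)))
    (fun x _ => consT x.2.1 x.2.2) ?_ ?_ ?_ ?_ ?_
  · intro t ht
    have ht' : edges t = n + 1 := mem_A.1 ht
    have hd : consT (decT t).1 (decT t).2 = t :=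
      consT_decT (by rw [ht']; exact (Nat.succ_ne_zero n))
    have he : edges (decT t).1 + edges (decT t).2 + 1 = n + 1 := by
      rw [← edges_consT, hd, ht']
    simp only [Finset.mem_sigma, Finset.mem_product, Finset.mem_range, mem_A]
    exact ⟨by omega, by trivial, by omega⟩
  · intro x hx
    simp only [Finset.mem_sigma, Finset.mem_product, Finset.mem_range, mem_A] at hx
    obtain ⟨hi, hc, ht⟩ := hx
    rw [mem_A, edges_consT, hc, ht]
    omega
  · intro t ht
    have ht' : edges t = n + 1 := mem_A.1 ht
    exact consT_decT (by rw [ht']; exact (Nat.succ_ne_zero n))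
  · rintro ⟨i, c, t⟩ hx
    simp only [Finset.mem_sigma, Finset.mem_product, Finset.mem_range, mem_A] at hx
    simp [hx.2.1]
  · intro t ht
    have ht' : edges t = n + 1 := mem_A.1 ht
    rw [consT_decT (by rw [ht']; exact (Nat.succ_ne_zero n))]

lemma catalan_range (n : ℕ) :
    catalan (n + 1) = ∑ i ∈ Finset.range (n + 1), catalan i * catalan (n - i) := by
  rw [catalan_succ', Finset.Nat.sum_antidiagonal_eq_sum_range_succ_mk]

lemma card_A (m n : ℕ) : (A m n).card = catalan n * m ^ (n + 1) := by
  induction n using Nat.strong_induction_on with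
  | _ n ih =>
    match n with
    | 0 =>
      rw [A_zero, Finset.card_image_of_injective _ (node_nil_inj m)]
      simp
    | (n + 1) =>
      have h1 : (A m (n + 1)).card = ∑ t ∈ A m (n + 1), (1 : ℕ) := by simp
      rw [h1, sum_A_succ]
      have h2 : ∀ i ∈ Finset.range (n + 1),
          ∑ c ∈ A m i, ∑ t ∈ A m (n - i), (1 : ℕ)
            = (catalan i * catalan (n - i)) * m ^ (n + 1 + 1) := by
        intro i hi
        have hi' : i < n + 1 := Finset.mem_range.1 hi
        simp only [Finset.sum_const, smul_eq_mul, mul_one]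
        rw [ih i (by omega), ih (n - i) (by omega)]
        rw [show catalan i * m ^ (i + 1) * (catalan (n - i) * m ^ (n - i + 1))
            = catalan i * catalan (n - i) * (m ^ (i + 1) * m ^ (n - i + 1)) by ring,
          ← pow_add]
        congr 2
        omega
      rw [Finset.sum_congr rfl h2, ← Finset.sum_mul]
      congr 1
      exact (catalan_range n).symm

lemma catalan_aux (n : ℕ) :
    ∑ i ∈ Finset.range (n + 1), catalan i * (catalan (n - i + 1) + catalan (n - i))
      = catalan (n + 1 + 1) := by
  have h1 : ∑ i ∈ Finset.range (n + 1), catalan i * (catalan (n - i + 1) + catalan (n - i))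
      = (∑ i ∈ Finset.range (n + 1), catalan i * catalan (n - i + 1))
        + ∑ i ∈ Finset.range (n + 1), catalan i * catalan (n - i) := by
    rw [← Finset.sum_add_distrib]
    exact Finset.sum_congr rfl fun i _ => by ring
  have h2 : ∑ i ∈ Finset.range (n + 1), catalan i * catalan (n - i + 1)
      = ∑ i ∈ Finset.range (n + 1), catalan i * catalan (n + 1 - i) :=
    Finset.sum_congr rfl fun i hi => by
      have := Finset.mem_range.1 hi
      congr 2
      omega
  have h3 : catalan (n + 1 + 1)
      = (∑ i ∈ Finset.range (n + 1), catalan i * catalan (n + 1 - i)) + catalan (n + 1) := by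
    rw [catalan_range (n + 1), Finset.sum_range_succ]
    simp
  rw [h1, h2, ← catalan_range n, h3]

lemma sum_rootDeg_succ_A (m n : ℕ) :
    ∑ t ∈ A m n, (rootDeg t + 1) = catalan (n + 1) * m ^ (n + 1) := by
  induction n using Nat.strong_induction_on with
  | _ n ih =>
    match n with
    | 0 =>
      rw [A_zero, Finset.sum_image (fun a _ b _ h => node_nil_inj m h)]
      simp [rootDeg]
    | (n + 1) =>
      rw [sum_A_succ]
      have h2 : ∀ i ∈ Finset.range (n + 1),
          ∑ c ∈ A m i, ∑ t ∈ A m (n - i), (rootDeg (consT c t) + 1)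
            = (catalan i * (catalan (n - i + 1) + catalan (n - i))) * m ^ (n + 1 + 1) := by
        intro i hi
        have hi' : i < n + 1 := Finset.mem_range.1 hi
        have hstep : ∀ c : UTree (Fin m),
            ∑ t ∈ A m (n - i), (rootDeg (consT c t) + 1)
              = (∑ t ∈ A m (n - i), (rootDeg t + 1)) + (A m (n - i)).card := by
          intro c
          have hh : ∀ t ∈ A m (n - i), rootDeg (consT c t) + 1 = (rootDeg t + 1) + 1 := by
            intro t _; rw [rootDeg_consT]
          rw [Finset.sum_congr rfl hh, Finset.sum_add_distrib]
          simp
        rw [Finset.sum_congr rfl (fun c _ => hstep c), Finset.sum_const,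
          ih (n - i) (by omega), card_A, card_A, smul_eq_mul]
        rw [show catalan i * m ^ (i + 1) *
              (catalan (n - i + 1) * m ^ (n - i + 1) + catalan (n - i) * m ^ (n - i + 1))
            = catalan i * (catalan (n - i + 1) + catalan (n - i))
                * (m ^ (i + 1) * m ^ (n - i + 1)) by ring, ← pow_add]
        congr 2
        omega
      rw [Finset.sum_congr rfl h2, ← Finset.sum_mul, catalan_aux]

end UTreeAux

theorem sum_root_degree_unranked (m p : ℕ) (hp : 1 ≤ p) :
    (p + 1) * (p + 2) *
        (∑ᶠ t : {t : UTree (Fin m) // UTree.edges t = p}, UTree.rootDeg t.1) =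
      3 * p * (Nat.choose (2 * p) p * m ^ (p + 1)) := by
  classical
  have hset : {t : UTree (Fin m) | UTree.edges t = p} = ↑(UTreeAux.A m p) :=
    ((UTreeAux.finite_edges p).coe_toFinset).symm
  have hsum : (∑ᶠ t : {t : UTree (Fin m) // UTree.edges t = p}, UTree.rootDeg t.1)
      = ∑ t ∈ UTreeAux.A m p, UTree.rootDeg t := by
    calc (∑ᶠ t : {t : UTree (Fin m) // UTree.edges t = p}, UTree.rootDeg t.1)
        = ∑ᶠ t ∈ {t : UTree (Fin m) | UTree.edges t = p}, UTree.rootDeg t :=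
          finsum_set_coe_eq_finsum_mem _
      _ = ∑ᶠ t ∈ (↑(UTreeAux.A m p) : Set (UTree (Fin m))), UTree.rootDeg t := by rw [hset]
      _ = ∑ t ∈ UTreeAux.A m p, UTree.rootDeg t := finsum_mem_coe_finset _ _
  rw [hsum]
  set G := ∑ t ∈ UTreeAux.A m p, UTree.rootDeg t with hGdef
  have key : G + catalan p * m ^ (p + 1) = catalan (p + 1) * m ^ (p + 1) := by
    rw [← UTreeAux.card_A m p, ← UTreeAux.sum_rootDeg_succ_A m p, Finset.sum_add_distrib]
    simp
    exact hGdef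
  have h4 : (p + 1) * (p + 2) * (G + catalan p * m ^ (p + 1))
      = (p + 1) * (p + 2) * (catalan (p + 1) * m ^ (p + 1)) := by rw [key]
  have hrw : (p + 1) * (p + 2) * (G + catalan p * m ^ (p + 1))
      = (p + 1) * (p + 2) * G + (p + 2) * ((p + 1) * catalan p) * m ^ (p + 1) := by ring
  have hrw2 : (p + 1) * (p + 2) * (catalan (p + 1) * m ^ (p + 1))
      = (p + 1) * ((p + 1 + 1) * catalan (p + 1)) * m ^ (p + 1) := by ring
  rw [hrw, hrw2, succ_mul_catalan_eq_centralBinom p,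
    succ_mul_catalan_eq_centralBinom (p + 1), Nat.succ_mul_centralBinom_succ p] at h4
  have hcb : Nat.choose (2 * p) p = Nat.centralBinom p := rfl
  rw [hcb]
  have hsplit : 2 * (2 * p + 1) * Nat.centralBinom p * m ^ (p + 1)
      = 3 * p * (Nat.centralBinom p * m ^ (p + 1))
        + (p + 2) * Nat.centralBinom p * m ^ (p + 1) := by ring
  rw [hsplit] at h4
  have h5 : (p + 1) * (p + 2) * G + (p + 2) * Nat.centralBinom p * m ^ (p + 1)
      = 3 * p * (Nat.centralBinom p * m ^ (p + 1))
        + (p + 2) * Nat.centralBinom p * m ^ (p + 1) := by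
    rw [← h4]
  exact Nat.add_right_cancel h5
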